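/- The function f(x) = (4(1−x²)/x + x)/log(1/x) is convex on the open interval (0,1). -/

import Mathlib

open Real Set

-- the key positivity lemma
lemma keyN {x : ℝ} (hx : x ∈ Set.Ioo (0:ℝ) 1) :
    0 ≤ 8 * (Real.log x)^2 + (12 + 3*x^2) * Real.log x + 8 - 6*x^2 := by
  obtain ⟨hx0, hx1⟩ := hx
  set t : ℝ := -Real.log x with ht
  have ht0 : 0 < t := by
    rw [ht]
    linarith [Real.log_neg hx0 hx1]
  have hxexp : x = Real.exp (-t) := by
    rw [ht, neg_neg, Real.exp_log hx0]
  have hq : 1 + 2*t + 2*t^2 ≤ Real.exp (2*t) := by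
    have := Real.quadratic_le_exp_of_nonneg (x := 2*t) (by linarith)
    nlinarith [this]
  have hx2 : x^2 * (1 + 2*t + 2*t^2) ≤ 1 := by
    have hx2e : x^2 = Real.exp (-(2*t)) := by
      rw [hxexp, sq, ← Real.exp_add]
      ring_nf
    rw [hx2e, Real.exp_neg]
    rw [inv_mul_le_iff₀ (Real.exp_pos _), mul_one]
    exact hq
  have hquart : 0 ≤ 16*t^4 - 8*t^3 + t + 2 := by
    nlinarith [sq_nonneg (4*t^2 - t), sq_nonneg (2*t-1), sq_nonneg t, ht0.le, mul_nonneg ht0.le (sq_nonneg (2*t-1))]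
  have hLt : Real.log x = -t := by rw [ht, neg_neg]
  rw [hLt]
  have hxx : 0 < x^2 := by positivity
  nlinarith [hx2, hquart, mul_pos ht0 hxx, sq_nonneg t]

theorem stmt_3 :
    ConvexOn ℝ (Set.Ioo (0 : ℝ) 1)
      (fun x => (4 * (1 - x ^ 2) / x + x) / Real.log (1 / x)) := by
  have hio : interior (Set.Ioo (0:ℝ) 1) = Set.Ioo (0:ℝ) 1 := isOpen_Ioo.interior_eq
  simp only [one_div, Real.log_inv]
  set F1 : ℝ → ℝ := fun y => ((4/y^2 + 3) * Real.log y + 4/y^2 - 3) / (Real.log y)^2 with hF1def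
  set F2 : ℝ → ℝ := fun y =>
    (8*(Real.log y)^2 + (12 + 3*y^2)*Real.log y + 8 - 6*y^2) / (-(y^3 * (Real.log y)^3)) with hF2def
  have hder : ∀ x ∈ Set.Ioo (0:ℝ) 1,
      HasDerivAt (fun y => (4 * (1 - y ^ 2) / y + y) / (-Real.log y)) (F1 x) x := by
    intro x hx
    obtain ⟨hx0, hx1⟩ := hx
    have hxne : x ≠ 0 := hx0.ne'
    have hlx : Real.log x < 0 := Real.log_neg hx0 hx1
    have hlne : Real.log x ≠ 0 := ne_of_lt hlx
    have h2 : HasDerivAt (fun y : ℝ => 4*(1-y^2)) (4 * -((2:ℕ) * x ^ 1)) x :=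
      ((hasDerivAt_pow 2 x).const_sub 1).const_mul 4
    have hnum : HasDerivAt (fun y : ℝ => 4*(1-y^2)/y + y)
        ((4 * -((2:ℕ) * x ^ 1) * x - 4*(1-x^2) * 1) / x^2 + 1) x :=
      (h2.div (hasDerivAt_id x) hxne).add (hasDerivAt_id x)
    have hlog : HasDerivAt Real.log x⁻¹ x := Real.hasDerivAt_log hxne
    have hraw := hnum.div hlog.neg (neg_ne_zero.mpr hlne)
    convert hraw using 1
    · rfl
    · rfl
    · rfl
    simp only [hF1def, Pi.neg_apply]
    rw [div_eq_div_iff (pow_ne_zero 2 hlne)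
      (by simpa using pow_ne_zero 2 hlne : (-Real.log x)^2 ≠ 0)]
    field_simp
    ring
  have hder2 : ∀ x ∈ Set.Ioo (0:ℝ) 1, HasDerivAt F1 (F2 x) x := by
    intro x hx
    obtain ⟨hx0, hx1⟩ := hx
    have hxne : x ≠ 0 := hx0.ne'
    have hlx : Real.log x < 0 := Real.log_neg hx0 hx1
    have hlne : Real.log x ≠ 0 := ne_of_lt hlx
    have hlog : HasDerivAt Real.log x⁻¹ x := Real.hasDerivAt_log hxne
    have ha : HasDerivAt (fun y : ℝ => 4/y^2) ((0 * x^2 - 4*((2:ℕ)*x^1))/(x^2)^2) x :=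
      (hasDerivAt_const x 4).div (hasDerivAt_pow 2 x) (pow_ne_zero 2 hxne)
    have hb := ha.add_const 3
    have hc := hb.mul hlog
    have hd := (hc.add ha).sub_const 3
    have hL2 : HasDerivAt (fun y : ℝ => (Real.log y)^2) ((2:ℕ) * Real.log x ^ 1 * x⁻¹) x :=
      hlog.pow 2
    have hraw := hd.div hL2 (pow_ne_zero 2 hlne)
    convert hraw using 1
    · rfl
    · rfl
    · rfl
    have hd1 : -(x^3 * (Real.log x)^3) ≠ 0 := by
      simp [pow_ne_zero, hxne, hlne]
    simp only [hF2def, Pi.add_apply, Pi.mul_apply]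
    rw [div_eq_div_iff hd1 (pow_ne_zero 2 (pow_ne_zero 2 hlne))]
    field_simp
    ring
  refine convexOn_of_hasDerivWithinAt2_nonneg (convex_Ioo 0 1)
    (fun x hx => (hder x hx).continuousAt.continuousWithinAt)
    (fun x hx => ((hder x (hio ▸ hx)).hasDerivWithinAt))
    (fun x hx => ((hder2 x (hio ▸ hx)).hasDerivWithinAt))
    (fun x hx => ?_)
  rw [hio] at hx
  obtain ⟨hx0, hx1⟩ := hx
  have hlx : Real.log x < 0 := Real.log_neg hx0 hx1
  have hden : 0 < -(x^3 * (Real.log x)^3) := by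
    have : 0 < x^3 * (-Real.log x)^3 :=
      mul_pos (pow_pos hx0 3) (pow_pos (neg_pos.mpr hlx) 3)
    nlinarith [this]
  exact div_nonneg (keyN ⟨hx0, hx1⟩) hden.le
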